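/- Let p and q be odd natural numbers with p,q ≥ 3. The number of pair partitions of {1,...,p+q} with at least three crosses equals (p+q-1)!! - p·q·(p-2)!!·(q-2)!!. -/

import Mathlib

open Finset

/-- A block of a partition of `Fin (p+q)` is a cross if it meets both
`{0,...,p-1}` and `{p,...,p+q-1}`. -/
def IsCross (p q : ℕ) (b : Finset (Fin (p + q))) : Prop :=
  (∃ i ∈ b, (i : ℕ) < p) ∧ ∃ i ∈ b, p ≤ (i : ℕ)

instance (p q : ℕ) (b : Finset (Fin (p + q))) : Decidable (IsCross p q b) := by
  unfold IsCross; infer_instance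

/-- The number of crosses of a partition of `Fin (p+q)`. -/
def crossCount (p q : ℕ) (P : Finpartition (Finset.univ : Finset (Fin (p + q)))) : ℕ :=
  (P.parts.filter (IsCross p q)).card


section AuxPP

variable {α : Type*} [DecidableEq α]

def PPF (s : Finset α) : Finset (Finpartition s) :=
  Finset.univ.filter fun P => ∀ b ∈ P.parts, b.card = 2

lemma mem_PPF {s : Finset α} {P : Finpartition s} : P ∈ PPF s ↔ ∀ b ∈ P.parts, b.card = 2 := by
  simp [PPF]

lemma avoid_parts_eq_erase {s : Finset α} (P : Finpartition s) {t : Finset α}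
    (ht : t ∈ P.parts) : (P.avoid t).parts = P.parts.erase t := by
  ext c
  rw [Finpartition.mem_avoid, mem_erase]
  constructor
  · rintro ⟨d, hd, hdt, rfl⟩
    have hne : d ≠ t := fun h => hdt (h ▸ le_refl t)
    have hdisj : Disjoint d t := P.disjoint hd ht hne
    rw [Finset.sdiff_eq_self_of_disjoint hdisj]
    exact ⟨hne, hd⟩
  · rintro ⟨hct, hc⟩
    refine ⟨c, hc, ?_, ?_⟩
    · intro hle
      obtain ⟨x, hx⟩ := P.nonempty_of_mem_parts hc
      exact hct (P.eq_of_mem_parts hc ht hx (hle hx))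
    · have hdisj : Disjoint c t := P.disjoint hc ht hct
      exact Finset.sdiff_eq_self_of_disjoint hdisj

lemma PPF_card_even {s : Finset α} {P : Finpartition s} (hP : P ∈ PPF s) : Even s.card := by
  rw [mem_PPF] at hP
  have : s.card = ∑ b ∈ P.parts, b.card := (P.sum_card_parts).symm
  rw [this]
  exact Finset.even_sum _ fun b hb => by rw [hP b hb]; exact even_two

lemma card_PPF : ∀ (n : ℕ) (s : Finset α), s.card = n →
    (PPF s).card = if Even n then Nat.doubleFactorial (n - 1) else 0 := by
  intro n
  induction n using Nat.strong_induction_on with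
  | _ n ih =>
  intro s hs
  by_cases hev : Even n
  · rw [if_pos hev]
    rcases Nat.eq_zero_or_pos n with h0 | hpos
    · subst h0
      rw [Finset.card_eq_zero] at hs
      subst hs
      have hbot : (∅ : Finset α) = (⊥ : Finset α) := rfl
      have huniq : ∀ P Q : Finpartition (∅ : Finset α), P = Q := by
        intro P Q
        ext1
        rw [Finpartition.parts_eq_empty_iff.2 hbot, Finpartition.parts_eq_empty_iff.2 hbot]
      have : PPF (∅ : Finset α) = {⊥} := by
        ext P
        simp only [mem_PPF, Finset.mem_singleton]
        constructor
        · intro _; exact huniq P ⊥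
        · rintro rfl
          intro b hb
          rw [Finpartition.parts_eq_empty_iff.2 hbot] at hb
          exact absurd hb (Finset.notMem_empty b)
      rw [this, Finset.card_singleton]
      rfl
    · -- n ≥ 2 even, n = m + 2
      obtain ⟨m, rfl⟩ : ∃ m, n = m + 2 := by
        rcases hev with ⟨k, hk⟩
        rcases Nat.eq_zero_or_pos k with h | h
        · omega
        · exact ⟨n - 2, by omega⟩
      have hsne : s.Nonempty := Finset.card_pos.1 (by omega)
      obtain ⟨a, ha⟩ := hsne
      -- fibers
      set fib : α → Finset (Finpartition s) :=
        fun b => (PPF s).filter (fun P => P.part a = {a, b}) with hfib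
      have hcover : PPF s = (s.erase a).biUnion fib := by
        ext P
        simp only [Finset.mem_biUnion, hfib, Finset.mem_filter, Finset.mem_erase]
        constructor
        · intro hP
          have hpart := P.part_mem.2 ha
          have hmem := P.mem_part ha
          have hcard : (P.part a).card = 2 := mem_PPF.1 hP _ hpart
          obtain ⟨x, y, hxy, hxyeq⟩ := Finset.card_eq_two.1 hcard
          have hax : a = x ∨ a = y := by
            rw [hxyeq] at hmem; simpa using hmem
          rcases hax with rfl | rfl
          · refine ⟨y, ⟨hxy.symm, ?_⟩, hP, hxyeq⟩
            have : y ∈ P.part a := by rw [hxyeq]; simp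
            exact P.le hpart this
          · refine ⟨x, ⟨hxy, ?_⟩, hP, ?_⟩
            · have : x ∈ P.part a := by rw [hxyeq]; simp
              exact P.le hpart this
            · rw [hxyeq, Finset.pair_comm]
        · rintro ⟨b, _, hP, _⟩
          exact hP
      have hdisj : ∀ x ∈ s.erase a, ∀ y ∈ s.erase a, x ≠ y → Disjoint (fib x) (fib y) := by
        intro x hx y hy hxy
        rw [Finset.disjoint_left]
        intro P hPx hPy
        simp only [hfib, Finset.mem_filter] at hPx hPy
        have : ({a, x} : Finset α) = {a, y} := hPx.2.symm.trans hPy.2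
        apply hxy
        have hxm : x ∈ ({a, y} : Finset α) := this ▸ (by simp : x ∈ ({a, x} : Finset α))
        have hxa : x ≠ a := by
          rw [Finset.mem_erase] at hx; exact hx.1
        simpa [hxa] using hxm
      have hfibcard : ∀ b ∈ s.erase a, (fib b).card = (PPF (s \ {a, b})).card := by
        intro b hb
        rw [Finset.mem_erase] at hb
        obtain ⟨hba, hbs⟩ := hb
        have hab : ({a, b} : Finset α) ⊆ s := by
          intro x hx; rcases Finset.mem_insert.1 hx with rfl | hx
          · exact ha
          · rw [Finset.mem_singleton] at hx; subst hx; exact hbs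
        have habne : ({a, b} : Finset α) ≠ ⊥ := by
          simp [Finset.bot_eq_empty, Finset.insert_ne_empty]
        have habdisj : Disjoint (s \ {a, b}) ({a, b} : Finset α) := Finset.sdiff_disjoint
        have habsup : (s \ {a, b}) ⊔ ({a, b} : Finset α) = s := by
          rw [Finset.sup_eq_union]
          exact Finset.sdiff_union_of_subset hab
        refine Finset.card_bij' (fun P _ => P.avoid {a, b})
          (fun Q _ => Q.extend habne habdisj habsup) ?_ ?_ ?_ ?_
        · -- maps into
          intro P hP
          simp only [hfib, Finset.mem_filter] at hP
          obtain ⟨hPP, hPa⟩ := hP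
          have hmem : ({a, b} : Finset α) ∈ P.parts := hPa ▸ P.part_mem.2 ha
          rw [mem_PPF]
          intro c hc
          rw [avoid_parts_eq_erase P hmem] at hc
          exact mem_PPF.1 hPP _ (Finset.mem_of_mem_erase hc)
        · -- maps back
          intro Q hQ
          simp only [hfib, Finset.mem_filter]
          have habQ : ({a, b} : Finset α) ∉ Q.parts := by
            intro hmem
            have := Q.le hmem (Finset.mem_insert_self a _)
            simp at this
          constructor
          · rw [mem_PPF]
            intro c hc
            rw [Finpartition.extend_parts, Finset.mem_insert] at hc
            rcases hc with rfl | hc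
            · exact Finset.card_pair hba.symm
            · exact mem_PPF.1 hQ _ hc
          · apply Finpartition.part_eq_of_mem
            · rw [Finpartition.extend_parts]; exact Finset.mem_insert_self _ _
            · exact Finset.mem_insert_self a _
        · -- left inverse
          intro P hP
          simp only [hfib, Finset.mem_filter] at hP
          have hmem : ({a, b} : Finset α) ∈ P.parts := hP.2 ▸ P.part_mem.2 ha
          ext1
          rw [Finpartition.extend_parts, avoid_parts_eq_erase P hmem, Finset.insert_erase hmem]
        · -- right inverse
          intro Q hQ
          have habQ : ({a, b} : Finset α) ∉ Q.parts := by
            intro hmem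
            have := Q.le hmem (Finset.mem_insert_self a _)
            simp at this
          ext1
          have hmem : ({a, b} : Finset α) ∈ (Q.extend habne habdisj habsup).parts := by
            rw [Finpartition.extend_parts]; exact Finset.mem_insert_self _ _
          rw [avoid_parts_eq_erase _ hmem, Finpartition.extend_parts,
            Finset.erase_insert habQ]
      have hscard : ∀ b ∈ s.erase a, (s \ {a, b}).card = m := by
        intro b hb
        rw [Finset.mem_erase] at hb
        have : ({a, b} : Finset α) ⊆ s := by
          intro x hx; rcases Finset.mem_insert.1 hx with rfl | hx
          · exact ha
          · rw [Finset.mem_singleton] at hx; subst hx; exact hb.2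
        rw [Finset.card_sdiff_of_subset this, Finset.card_pair (Ne.symm hb.1), hs]
        omega
      have hmev : Even m := by rcases hev with ⟨k, hk⟩; exact ⟨k - 1, by omega⟩
      rw [hcover, Finset.card_biUnion hdisj]
      have : ∀ b ∈ s.erase a, (fib b).card = Nat.doubleFactorial (m - 1) := by
        intro b hb
        rw [hfibcard b hb, ih m (by omega) _ (hscard b hb), if_pos hmev]
      rw [Finset.sum_congr rfl this, Finset.sum_const, Finset.card_erase_of_mem ha, hs]
      simp only [smul_eq_mul]
      rcases Nat.eq_zero_or_pos m with rfl | hm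
      · simp [Nat.doubleFactorial]
      · have h1 : m + 2 - 1 = (m - 1) + 2 := by omega
        rw [h1, Nat.doubleFactorial_add_two]
  · rw [if_neg hev]
    rw [Finset.card_eq_zero]
    rw [Finset.eq_empty_iff_forall_notMem]
    intro P hP
    exact hev (hs ▸ PPF_card_even hP)

/-- Glue two finpartitions of disjoint finsets. -/
def together {u v : Finset α} (huv : Disjoint u v) (P : Finpartition u) (Q : Finpartition v) :
    Finpartition (u ∪ v) where
  parts := P.parts ∪ Q.parts
  supIndep := by
    rw [Finset.supIndep_iff_pairwiseDisjoint, Finset.coe_union]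
    apply Set.PairwiseDisjoint.union P.disjoint Q.disjoint
    intro b hb c hc _
    exact huv.mono (P.le hb) (Q.le hc)
  sup_parts := by rw [Finset.sup_union, P.sup_parts, Q.sup_parts]; rfl
  bot_notMem := by
    rw [Finset.mem_union]
    rintro (h | h)
    · exact P.bot_notMem h
    · exact Q.bot_notMem h

lemma together_parts {u v : Finset α} (huv : Disjoint u v) (P : Finpartition u)
    (Q : Finpartition v) : (together huv P Q).parts = P.parts ∪ Q.parts := rfl

lemma avoid_parts_filter {s u v : Finset α} (huv : Disjoint u v) (P : Finpartition s)
    (hP : ∀ b ∈ P.parts, b ⊆ u ∨ b ⊆ v) :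
    (P.avoid v).parts = P.parts.filter (· ⊆ u) := by
  ext c
  rw [Finpartition.mem_avoid, Finset.mem_filter]
  constructor
  · rintro ⟨d, hd, hdv, rfl⟩
    rcases hP d hd with h | h
    · have hdisj : Disjoint d v := huv.mono_left h
      rw [Finset.sdiff_eq_self_of_disjoint hdisj]
      exact ⟨hd, h⟩
    · exact absurd h hdv
  · rintro ⟨hc, hcu⟩
    have hdisj : Disjoint c v := huv.mono_left hcu
    refine ⟨c, hc, fun h => (P.nonempty_of_mem_parts hc).ne_empty ?_,
      Finset.sdiff_eq_self_of_disjoint hdisj⟩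
    have : c ≤ ⊥ := huv hcu h
    simpa using this

lemma card_split {u v : Finset α} (huv : Disjoint u v) :
    ((PPF (u ∪ v)).filter (fun P => ∀ b ∈ P.parts, b ⊆ u ∨ b ⊆ v)).card
      = (PPF u).card * (PPF v).card := by
  rw [← Finset.card_product]
  have hvu : (u ∪ v) \ v = u := Finset.union_sdiff_cancel_right huv
  have huv' : (u ∪ v) \ u = v := Finset.union_sdiff_cancel_left huv
  refine Finset.card_bij'
    (fun P _ => (((P.avoid v).copy hvu), (((P.avoid u).copy huv'))))
    (fun Q _ => together huv Q.1 Q.2) ?_ ?_ ?_ ?_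
  · intro P hP
    rw [Finset.mem_filter, mem_PPF] at hP
    obtain ⟨h2, hsplit⟩ := hP
    rw [Finset.mem_product]
    constructor
    · rw [mem_PPF]
      intro b hb
      rw [Finpartition.copy_parts, avoid_parts_filter huv P hsplit] at hb
      exact h2 b (Finset.mem_of_mem_filter b hb)
    · rw [mem_PPF]
      intro b hb
      rw [Finpartition.copy_parts,
        avoid_parts_filter huv.symm P (fun b hb => (hsplit b hb).symm)] at hb
      exact h2 b (Finset.mem_of_mem_filter b hb)
  · -- together lands in filter
    intro Q hQ
    rw [Finset.mem_product, mem_PPF, mem_PPF] at hQ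
    rw [Finset.mem_filter, mem_PPF]
    constructor
    · intro b hb
      rw [together_parts, Finset.mem_union] at hb
      rcases hb with hb | hb
      · exact hQ.1 b hb
      · exact hQ.2 b hb
    · intro b hb
      rw [together_parts, Finset.mem_union] at hb
      rcases hb with hb | hb
      · exact Or.inl (Q.1.le hb)
      · exact Or.inr (Q.2.le hb)
  · -- left inverse
    intro P hP
    rw [Finset.mem_filter] at hP
    have hsplit := hP.2
    ext1
    rw [together_parts, Finpartition.copy_parts, Finpartition.copy_parts,
      avoid_parts_filter huv P hsplit,
      avoid_parts_filter huv.symm P (fun b hb => (hsplit b hb).symm)]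
    ext c
    simp only [Finset.mem_union, Finset.mem_filter]
    constructor
    · rintro (⟨h, _⟩ | ⟨h, _⟩) <;> exact h
    · intro hc
      rcases hsplit c hc with h | h
      · exact Or.inl ⟨hc, h⟩
      · exact Or.inr ⟨hc, h⟩
  · -- right inverse
    intro Q hQ
    obtain ⟨Q1, Q2⟩ := Q
    dsimp only at *
    have h1 : ∀ b ∈ (together huv Q1 Q2).parts, b ⊆ u ∨ b ⊆ v := by
      intro b hb
      rw [together_parts, Finset.mem_union] at hb
      rcases hb with hb | hb
      · exact Or.inl (Q1.le hb)
      · exact Or.inr (Q2.le hb)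
    have hu : ((together huv Q1 Q2).avoid v).parts = Q1.parts := by
      rw [avoid_parts_filter huv _ h1, together_parts]
      ext c
      simp only [Finset.mem_filter, Finset.mem_union]
      constructor
      · rintro ⟨hc | hc, hcu⟩
        · exact hc
        · exfalso
          have : c ≤ ⊥ := huv hcu (Q2.le hc)
          exact (Q2.nonempty_of_mem_parts hc).ne_empty (by simpa using this)
      · intro hc
        exact ⟨Or.inl hc, Q1.le hc⟩
    have hv : ((together huv Q1 Q2).avoid u).parts = Q2.parts := by
      rw [avoid_parts_filter huv.symm _ (fun b hb => (h1 b hb).symm), together_parts]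
      ext c
      simp only [Finset.mem_filter, Finset.mem_union]
      constructor
      · rintro ⟨hc | hc, hcv⟩
        · exfalso
          have : c ≤ ⊥ := huv (Q1.le hc) hcv
          exact (Q1.nonempty_of_mem_parts hc).ne_empty (by simpa using this)
        · exact hc
      · intro hc
        exact ⟨Or.inr hc, Q2.le hc⟩
    rw [Prod.mk.injEq]
    exact ⟨by ext1; rw [Finpartition.copy_parts, hu], by ext1; rw [Finpartition.copy_parts, hv]⟩



section CrossLemmas

variable (p q : ℕ)

def Lset : Finset (Fin (p + q)) := Finset.univ.filter (fun i => (i : ℕ) < p)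
def Rset : Finset (Fin (p + q)) := Finset.univ.filter (fun i => p ≤ (i : ℕ))

variable {p q}

lemma mem_Lset {i : Fin (p + q)} : i ∈ Lset p q ↔ (i : ℕ) < p := by simp [Lset]
lemma mem_Rset {i : Fin (p + q)} : i ∈ Rset p q ↔ p ≤ (i : ℕ) := by simp [Rset]

lemma Lset_disj_Rset : Disjoint (Lset p q) (Rset p q) := by
  rw [Finset.disjoint_left]
  intro i hL hR
  rw [mem_Lset] at hL
  rw [mem_Rset] at hR
  omega

lemma Lset_union_Rset : Lset p q ∪ Rset p q = Finset.univ := by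
  ext i
  simp only [Finset.mem_union, mem_Lset, mem_Rset, Finset.mem_univ, iff_true]
  omega

lemma Lset_card : (Lset p q).card = p := by
  have h : (Lset p q).card = (Finset.range p).card := by
    refine Finset.card_bij' (fun i _ => (i : ℕ))
      (fun n hn => (⟨n, lt_of_lt_of_le (Finset.mem_range.1 hn) (Nat.le_add_right p q)⟩ : Fin (p+q)))
      ?_ ?_ ?_ ?_
    · intro i hi
      rw [Finset.mem_range]
      exact mem_Lset.1 hi
    · intro n hn
      rw [mem_Lset]
      exact Finset.mem_range.1 hn
    · intro i _
      exact Fin.ext rfl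
    · intro n _
      rfl
  rw [h, Finset.card_range]

lemma Rset_card : (Rset p q).card = q := by
  have h := Finset.card_union_of_disjoint (Lset_disj_Rset (p := p) (q := q))
  rw [Lset_union_Rset, Finset.card_univ, Fintype.card_fin, Lset_card] at h
  omega

lemma crossCount_odd (hp : Odd p)
    (P : Finpartition (Finset.univ : Finset (Fin (p + q))))
    (hP : ∀ b ∈ P.parts, b.card = 2) : Odd (crossCount p q P) := by
  set L := Lset p q with hLdef
  have hL : L = P.parts.biUnion (fun b => b ∩ L) := by
    ext i
    simp only [Finset.mem_biUnion, Finset.mem_inter]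
    constructor
    · intro hi
      obtain ⟨b, hb, hib⟩ := P.exists_mem (Finset.mem_univ i)
      exact ⟨b, hb, hib, hi⟩
    · rintro ⟨b, _, _, hi⟩
      exact hi
  have hsum : (P.parts.biUnion (fun b => b ∩ L)).card = ∑ b ∈ P.parts, (b ∩ L).card :=
    Finset.card_biUnion (fun x hx y hy hxy =>
      (P.disjoint hx hy hxy).mono Finset.inter_subset_left Finset.inter_subset_left)
  rw [← hL] at hsum
  rw [← Finset.sum_filter_add_sum_filter_not P.parts (IsCross p q)] at hsum
  have h1 : ∀ b ∈ P.parts.filter (IsCross p q), (b ∩ L).card = 1 := by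
    intro b hb
    rw [Finset.mem_filter] at hb
    obtain ⟨hbp, ⟨x, hxb, hxp⟩, ⟨y, hyb, hyp⟩⟩ := hb
    have hxL : x ∈ b ∩ L := Finset.mem_inter.2 ⟨hxb, mem_Lset.2 hxp⟩
    have hlt : (b ∩ L).card < b.card := by
      apply Finset.card_lt_card
      rw [Finset.ssubset_iff_of_subset Finset.inter_subset_left]
      refine ⟨y, hyb, ?_⟩
      rw [Finset.mem_inter, hLdef, mem_Lset]
      push_neg
      intro _
      omega
    have h1 : 1 ≤ (b ∩ L).card := Finset.card_pos.2 ⟨x, hxL⟩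
    have h2 : b.card = 2 := hP b hbp
    omega
  have h2 : Even (∑ b ∈ P.parts.filter (fun b => ¬ IsCross p q b), (b ∩ L).card) := by
    apply Finset.even_sum
    intro b hb
    rw [Finset.mem_filter] at hb
    obtain ⟨hbp, hnc⟩ := hb
    rw [IsCross, not_and_or] at hnc
    rcases hnc with h | h
    · push_neg at h
      have : b ∩ L = ∅ := by
        rw [Finset.eq_empty_iff_forall_notMem]
        intro i hi
        rw [Finset.mem_inter, hLdef, mem_Lset] at hi
        exact absurd hi.2 (not_lt.2 (h i hi.1))
      rw [this]
      simp
    · push_neg at h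
      have : b ∩ L = b := by
        rw [Finset.inter_eq_left]
        intro i hi
        rw [hLdef, mem_Lset]
        exact h i hi
      rw [this, hP b hbp]
      exact even_two
  rw [Finset.sum_congr rfl h1, Finset.sum_const, smul_eq_mul, mul_one] at hsum
  have hLc : L.card = p := Lset_card
  obtain ⟨k, hk⟩ := hp
  obtain ⟨j, hj⟩ := h2
  refine ⟨(crossCount p q P - 1) / 2, ?_⟩
  unfold crossCount
  omega

end CrossLemmas

set_option maxHeartbeats 1000000 in
lemma card_EC1 {p q : ℕ} (hp : Odd p) (hq : Odd q) :
    ((PPF (Finset.univ : Finset (Fin (p + q)))).filter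
        (fun P => crossCount p q P = 1)).card
      = p * q * Nat.doubleFactorial (p - 2) * Nat.doubleFactorial (q - 2) := by
  set L := Lset p q with hLdef
  set R := Rset p q with hRdef
  set C : Finset (Finset (Fin (p + q))) :=
    (L ×ˢ R).image (fun ab => ({ab.1, ab.2} : Finset (Fin (p + q)))) with hCdef
  set fib : Finset (Fin (p + q)) → Finset (Finpartition (Finset.univ : Finset (Fin (p + q)))) :=
    fun c => (PPF Finset.univ).filter (fun P => P.parts.filter (IsCross p q) = {c}) with hfibdef
  have habne : ∀ a ∈ L, ∀ b ∈ R, a ≠ b := by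
    intro a ha b hb h
    subst h
    rw [mem_Lset] at ha
    rw [mem_Rset] at hb
    omega
  -- Step A : cover
  have hcover : (PPF (Finset.univ : Finset (Fin (p + q)))).filter
      (fun P => crossCount p q P = 1) = C.biUnion fib := by
    ext P
    simp only [Finset.mem_biUnion, Finset.mem_filter, hfibdef]
    constructor
    · rintro ⟨hPP, hcc⟩
      obtain ⟨c, hc⟩ := Finset.card_eq_one.1 hcc
      have hcmem : c ∈ P.parts.filter (IsCross p q) := hc ▸ Finset.mem_singleton_self c
      rw [Finset.mem_filter] at hcmem
      obtain ⟨hcp, ⟨i, hic, hip⟩, ⟨j, hjc, hjp⟩⟩ := hcmem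
      have hij : i ≠ j := fun h => by subst h; omega
      have hcard : c.card = 2 := mem_PPF.1 hPP c hcp
      have hceq : c = {i, j} := by
        symm
        apply Finset.eq_of_subset_of_card_le
        · intro x hx
          rcases Finset.mem_insert.1 hx with rfl | hx
          · exact hic
          · rw [Finset.mem_singleton] at hx; subst hx; exact hjc
        · rw [hcard, Finset.card_pair hij]
      refine ⟨c, ?_, hPP, hc⟩
      rw [hCdef, Finset.mem_image]
      exact ⟨(i, j), Finset.mem_product.2 ⟨mem_Lset.2 hip, mem_Rset.2 hjp⟩, hceq.symm⟩
    · rintro ⟨c, _, hPP, hc⟩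
      refine ⟨hPP, ?_⟩
      rw [crossCount, hc, Finset.card_singleton]
  -- Step B : disjoint fibers
  have hdisj : ∀ x ∈ C, ∀ y ∈ C, x ≠ y → Disjoint (fib x) (fib y) := by
    intro x _ y _ hxy
    rw [Finset.disjoint_left]
    intro P hPx hPy
    rw [hfibdef, Finset.mem_filter] at hPx hPy
    exact hxy (Finset.singleton_injective (hPx.2.symm.trans hPy.2))
  -- Step C : card C
  have hCcard : C.card = p * q := by
    rw [hCdef]
    rw [Finset.card_image_of_injOn, Finset.card_product, Lset_card, Rset_card]
    rintro ⟨a, b⟩ hab ⟨a', b'⟩ hab' h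
    rw [Finset.mem_coe, Finset.mem_product] at hab hab'
    dsimp only at h
    have ha' : a' ∈ ({a, b} : Finset (Fin (p + q))) := h ▸ Finset.mem_insert_self a' {b'}
    have hb' : b' ∈ ({a, b} : Finset (Fin (p + q))) := h ▸ (by simp)
    have ha'a : a' = a := by
      rcases Finset.mem_insert.1 ha' with h' | h'
      · exact h'
      · rw [Finset.mem_singleton] at h'
        exact absurd h' (habne a' hab'.1 b hab.2)
    have hb'b : b' = b := by
      rcases Finset.mem_insert.1 hb' with h' | h'
      · exact absurd h'.symm (habne a hab.1 b' hab'.2)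
      · exact Finset.mem_singleton.1 h'
    rw [ha'a, hb'b]
  -- Step D : fiber cardinality
  have hfibcard : ∀ c ∈ C, (fib c).card
      = Nat.doubleFactorial (p - 2) * Nat.doubleFactorial (q - 2) := by
    intro c hc
    rw [hCdef, Finset.mem_image] at hc
    obtain ⟨⟨a, b⟩, hab, rfl⟩ := hc
    rw [Finset.mem_product] at hab
    obtain ⟨haL, hbR⟩ := hab
    have hab' : a ≠ b := habne a haL b hbR
    set u := L.erase a with hudef
    set v := R.erase b with hvdef
    have hbL : b ∉ L := fun h => habne b h b hbR rfl
    have haR : a ∉ R := fun h => habne a haL a h rfl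
    have huniv : (Finset.univ : Finset (Fin (p + q))) \ {a, b} = u ∪ v := by
      ext i
      simp only [Finset.mem_sdiff, Finset.mem_univ, true_and, Finset.mem_insert,
        Finset.mem_singleton, Finset.mem_union, hudef, hvdef, Finset.mem_erase]
      constructor
      · intro h
        push_neg at h
        have : i ∈ L ∪ R := by rw [hLdef, hRdef, Lset_union_Rset]; exact Finset.mem_univ i
        rcases Finset.mem_union.1 this with hi | hi
        · exact Or.inl ⟨h.1, hi⟩
        · exact Or.inr ⟨h.2, hi⟩
      · rintro (⟨hia, hiL⟩ | ⟨hib, hiR⟩)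
        · push_neg
          exact ⟨hia, fun h => hbL (h ▸ hiL)⟩
        · push_neg
          exact ⟨fun h => haR (h ▸ hiR), hib⟩
    have huvdisj : Disjoint u v :=
      (Lset_disj_Rset (p := p) (q := q)).mono (Finset.erase_subset a L) (Finset.erase_subset b R)
    have hcsub : ({a, b} : Finset (Fin (p + q))) ⊆ Finset.univ := Finset.subset_univ _
    have hcne : ({a, b} : Finset (Fin (p + q))) ≠ ⊥ := by
      simp [Finset.bot_eq_empty]
    have hdisj2 : Disjoint (u ∪ v) ({a, b} : Finset (Fin (p + q))) := by
      rw [← huniv]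
      exact Finset.sdiff_disjoint
    have hsup : (u ∪ v) ⊔ ({a, b} : Finset (Fin (p + q))) = Finset.univ := by
      rw [Finset.sup_eq_union, ← huniv]
      exact Finset.sdiff_union_of_subset hcsub
    have hcross : IsCross p q {a, b} :=
      ⟨⟨a, Finset.mem_insert_self a _, mem_Lset.1 haL⟩,
       ⟨b, by simp, mem_Rset.1 hbR⟩⟩
    have key : (fib {a, b}).card
        = ((PPF (u ∪ v)).filter (fun Q => ∀ b' ∈ Q.parts, b' ⊆ u ∨ b' ⊆ v)).card := by
      refine Finset.card_bij' (fun P _ => (P.avoid {a, b}).copy huniv)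
        (fun Q _ => Q.extend hcne hdisj2 hsup) ?_ ?_ ?_ ?_
      · -- forward membership
        intro P hP
        rw [hfibdef, Finset.mem_filter] at hP
        obtain ⟨hPP, hPf⟩ := hP
        have hcp : ({a, b} : Finset (Fin (p + q))) ∈ P.parts :=
          Finset.mem_of_mem_filter _ (hPf ▸ Finset.mem_singleton_self _)
        rw [Finset.mem_filter, mem_PPF]
        have hparts : ((P.avoid {a, b}).copy huniv).parts = P.parts.erase {a, b} := by
          rw [Finpartition.copy_parts, avoid_parts_eq_erase P hcp]
        constructor
        · intro b' hb'
          rw [hparts] at hb'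
          exact mem_PPF.1 hPP b' (Finset.mem_of_mem_erase hb')
        · intro b' hb'
          have hb'sub : b' ⊆ u ∪ v := ((P.avoid {a, b}).copy huniv).le hb'
          rw [hparts, Finset.mem_erase] at hb'
          obtain ⟨hb'ne, hb'p⟩ := hb'
          have hnc : ¬ IsCross p q b' := by
            intro hcr
            have : b' ∈ P.parts.filter (IsCross p q) := Finset.mem_filter.2 ⟨hb'p, hcr⟩
            rw [hPf, Finset.mem_singleton] at this
            exact hb'ne this
          rw [IsCross, not_and_or] at hnc
          rcases hnc with h | h
          · -- all elements ≥ p : b' ⊆ v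
            push_neg at h
            right
            intro i hi
            rcases Finset.mem_union.1 (hb'sub hi) with h' | h'
            · exfalso
              rw [hudef, Finset.mem_erase, hLdef, mem_Lset] at h'
              exact absurd h'.2 (not_lt.2 (h i hi))
            · exact h'
          · push_neg at h
            left
            intro i hi
            rcases Finset.mem_union.1 (hb'sub hi) with h' | h'
            · exact h'
            · exfalso
              rw [hvdef, Finset.mem_erase, hRdef, mem_Rset] at h'
              exact absurd h'.2 (not_le.2 (h i hi))
      · -- backward membership
        intro Q hQ
        rw [Finset.mem_filter, mem_PPF] at hQ
        obtain ⟨hQ2, hQsplit⟩ := hQ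
        have hcQ : ({a, b} : Finset (Fin (p + q))) ∉ Q.parts := by
          intro h
          have := Q.le h (Finset.mem_insert_self a _)
          rcases Finset.mem_union.1 this with h' | h'
          · rw [hudef, Finset.mem_erase] at h'
            exact h'.1 rfl
          · exact haR (hRdef ▸ Finset.mem_of_mem_erase h')
        rw [hfibdef, Finset.mem_filter, mem_PPF]
        constructor
        · intro b' hb'
          rw [Finpartition.extend_parts, Finset.mem_insert] at hb'
          rcases hb' with rfl | hb'
          · exact Finset.card_pair hab'
          · exact hQ2 b' hb'
        · rw [Finpartition.extend_parts, Finset.filter_insert, if_pos hcross]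
          have : Q.parts.filter (IsCross p q) = ∅ := by
            rw [Finset.filter_eq_empty_iff]
            intro b' hb'
            rcases hQsplit b' hb' with h | h
            · rintro ⟨_, ⟨j, hj, hjp⟩⟩
              have := h hj
              rw [hudef, Finset.mem_erase, hLdef, mem_Lset] at this
              omega
            · rintro ⟨⟨i, hi, hip⟩, _⟩
              have := h hi
              rw [hvdef, Finset.mem_erase, hRdef, mem_Rset] at this
              omega
          rw [this]; rfl
      · -- left inverse
        intro P hP
        rw [hfibdef, Finset.mem_filter] at hP
        have hcp : ({a, b} : Finset (Fin (p + q))) ∈ P.parts :=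
          Finset.mem_of_mem_filter _ (hP.2 ▸ Finset.mem_singleton_self _)
        ext1
        rw [Finpartition.extend_parts, Finpartition.copy_parts,
          avoid_parts_eq_erase P hcp, Finset.insert_erase hcp]
      · -- right inverse
        intro Q hQ
        rw [Finset.mem_filter] at hQ
        have hcQ : ({a, b} : Finset (Fin (p + q))) ∉ Q.parts := by
          intro h
          have := Q.le h (Finset.mem_insert_self a _)
          rcases Finset.mem_union.1 this with h' | h'
          · rw [hudef, Finset.mem_erase] at h'
            exact h'.1 rfl
          · exact haR (hRdef ▸ Finset.mem_of_mem_erase h')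
        have hmem : ({a, b} : Finset (Fin (p + q)))
            ∈ (Q.extend hcne hdisj2 hsup).parts := by
          rw [Finpartition.extend_parts]
          exact Finset.mem_insert_self _ _
        ext1
        rw [Finpartition.copy_parts, avoid_parts_eq_erase _ hmem,
          Finpartition.extend_parts, Finset.erase_insert hcQ]
    rw [key]
    have hsplit : ((PPF (u ∪ v)).filter (fun Q => ∀ b' ∈ Q.parts, b' ⊆ u ∨ b' ⊆ v)).card
        = (PPF u).card * (PPF v).card := by
      convert card_split huvdisj using 2
      congr!
    rw [hsplit]
    have hucard : u.card = p - 1 := by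
      rw [hudef, Finset.card_erase_of_mem haL, hLdef, Lset_card]
    have hvcard : v.card = q - 1 := by
      rw [hvdef, Finset.card_erase_of_mem hbR, hRdef, Rset_card]
    obtain ⟨k, hk⟩ := hp
    obtain ⟨l, hl⟩ := hq
    rw [card_PPF (p - 1) u hucard, card_PPF (q - 1) v hvcard,
      if_pos ⟨k, by omega⟩, if_pos ⟨l, by omega⟩]
    congr 2 <;> omega
  rw [hcover, Finset.card_biUnion hdisj, Finset.sum_congr rfl hfibcard,
    Finset.sum_const, smul_eq_mul, hCcard]
  ring


end AuxPP

/-- For odd `p, q ≥ 3`, the number of pair partitions of `{1,...,p+q}` with at least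
three crosses equals `(p+q-1)!! - pq(p-2)!!(q-2)!!`. -/
theorem count_pair_partitions_ge_three_crosses_odd (p q : ℕ)
    (hp : Odd p) (hq : Odd q) (hp3 : 3 ≤ p) (hq3 : 3 ≤ q) :
    Nat.card {P : Finpartition (Finset.univ : Finset (Fin (p + q))) //
        (∀ b ∈ P.parts, b.card = 2) ∧ 3 ≤ crossCount p q P} =
      Nat.doubleFactorial (p + q - 1) -
        p * q * Nat.doubleFactorial (p - 2) * Nat.doubleFactorial (q - 2) := by
  have hpq : Even (p + q) := hp.add_odd hq
  rw [Nat.card_eq_fintype_card, Fintype.card_subtype]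
  have h1 : (Finset.univ.filter (fun P : Finpartition (Finset.univ : Finset (Fin (p + q))) =>
      (∀ b ∈ P.parts, b.card = 2) ∧ 3 ≤ crossCount p q P))
      = (PPF Finset.univ).filter (fun P => 3 ≤ crossCount p q P) := by
    rw [PPF, Finset.filter_filter]
    congr!
  rw [h1]
  have h2 : (PPF (Finset.univ : Finset (Fin (p + q)))).filter
        (fun P => 3 ≤ crossCount p q P)
      = (PPF Finset.univ).filter (fun P => ¬ crossCount p q P = 1) := by
    apply Finset.filter_congr
    intro P hP
    obtain ⟨k, hk⟩ := crossCount_odd hp P (mem_PPF.1 hP)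
    constructor
    · intro h h'
      omega
    · intro h
      omega
  rw [h2, Finset.filter_not, Finset.card_sdiff_of_subset (Finset.filter_subset _ _)]
  have h3 : (PPF (Finset.univ : Finset (Fin (p + q)))).card
      = Nat.doubleFactorial (p + q - 1) := by
    rw [card_PPF (p + q) Finset.univ (by rw [Finset.card_univ, Fintype.card_fin]), if_pos hpq]
  rw [h3, card_EC1 hp hq]
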